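/- Let K be a differential field with field of constants C, and let D be an algebraic field extension of C. Then the tensor product D ⊗_C K is a field (with derivation extending that of K by acting as zero on D), and its field of constants is D. -/

import Mathlib

open TensorProduct Polynomial

set_option linter.unusedSectionVars false
set_option maxHeartbeats 1000000
set_option synthInstance.maxHeartbeats 400000

section Aux

variable {C K : Type} [Field C] [CharZero C] [Field K] [Algebra C K]

theorem aux_d_one (d : K →ₗ[C] K) (hd_mul : ∀ a b : K, d (a * b) = a * d b + d a * b) :
    d 1 = 0 := by
  have h := hd_mul 1 1
  simp only [mul_one, one_mul] at h
  have h2 : d 1 + d 1 = d 1 + 0 := by rw [add_zero]; exact h.symm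
  exact add_left_cancel h2

theorem aux_d_pow (d : K →ₗ[C] K) (hd_mul : ∀ a b : K, d (a * b) = a * d b + d a * b)
    (x : K) : ∀ n : ℕ, d (x ^ (n + 1)) = (n + 1 : ℕ) * x ^ n * d x := by
  intro n
  induction n with
  | zero => simp
  | succ m ih =>
    have : x ^ (m + 2) = x * x ^ (m + 1) := by ring
    rw [this, hd_mul, ih]
    push_cast
    ring

theorem aux_d_aeval (d : K →ₗ[C] K) (hd_mul : ∀ a b : K, d (a * b) = a * d b + d a * b)
    (x : K) (q : C[X]) : d (aeval x q) = aeval x (derivative q) * d x := by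
  induction q using Polynomial.induction_on' with
  | add p q hp hq => simp [hp, hq]; ring
  | monomial n a =>
    rcases n with _ | m
    · have : (algebraMap C K) a = a • (1 : K) := by rw [Algebra.smul_def, mul_one]
      simp [this, map_smul, aux_d_one d hd_mul]
    · rw [aeval_monomial, derivative_monomial]
      rw [show (algebraMap C K) a * x ^ (m+1) = a • x ^ (m+1) from (Algebra.smul_def a _).symm,
        map_smul, aux_d_pow d hd_mul x m]
      simp only [aeval_monomial, Nat.add_sub_cancel, map_mul, Algebra.smul_def, map_natCast]
      push_cast
      ring

/-- The constants are relatively algebraically closed in `K`. -/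
theorem aux_relclosed (d : K →ₗ[C] K) (hd_mul : ∀ a b : K, d (a * b) = a * d b + d a * b)
    (hconst : ∀ x : K, d x = 0 ↔ ∃ c : C, x = algebraMap C K c)
    (x : K) (hx : IsIntegral C x) : ∃ c : C, x = algebraMap C K c := by
  rw [← hconst]
  by_contra hdx
  set p := minpoly C x with hp
  have hone : 0 < p.natDegree := minpoly.natDegree_pos hx
  have h0 : d (aeval x p) = 0 := by rw [minpoly.aeval]; simp
  rw [aux_d_aeval d hd_mul] at h0
  have h1 : aeval x (derivative p) = 0 := by
    rcases mul_eq_zero.1 h0 with h | h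
    · exact h
    · exact absurd h hdx
  have hpd : derivative p ≠ 0 := by
    intro h
    rw [Polynomial.natDegree_eq_zero_of_derivative_eq_zero h] at hone
    exact lt_irrefl _ hone
  have := minpoly.degree_le_of_ne_zero C x hpd h1
  have h2 := Polynomial.degree_derivative_lt (show p ≠ 0 from minpoly.ne_zero hx)
  exact absurd (lt_of_le_of_lt this h2) (lt_irrefl _)

/-- A monic irreducible polynomial over a relatively algebraically closed subfield stays
irreducible. -/
theorem aux_irred_map (hcl : ∀ x : K, IsIntegral C x → ∃ c : C, x = algebraMap C K c)
    {p : C[X]} (hmonic : p.Monic) (hirr : Irreducible p) :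
    Irreducible (p.map (algebraMap C K)) := by
  have hinj : Function.Injective (algebraMap C K) := (algebraMap C K).injective
  have hpm : (p.map (algebraMap C K)).Monic := hmonic.map _
  have hdegmap : (p.map (algebraMap C K)).natDegree = p.natDegree :=
    p.natDegree_map_eq_of_injective hinj
  constructor
  · intro hu
    have : (p.map (algebraMap C K)).natDegree = 0 := natDegree_eq_zero_of_isUnit hu
    rw [hdegmap] at this
    exact hirr.natDegree_pos.ne' this
  · intro a b hab
    by_contra hcon
    push_neg at hcon
    obtain ⟨ha, hb⟩ := hcon
    have hmapz : p.map (algebraMap C K) ≠ 0 := hpm.ne_zero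
    have haz : a ≠ 0 := by rintro rfl; rw [zero_mul] at hab; exact hmapz hab
    have hbz : b ≠ 0 := by rintro rfl; rw [mul_zero] at hab; exact hmapz hab
    have hlc : a.leadingCoeff ≠ 0 := leadingCoeff_ne_zero.mpr haz
    have hda : 0 < a.degree := degree_pos_of_ne_zero_of_nonunit haz ha
    have hdb : 0 < b.degree := degree_pos_of_ne_zero_of_nonunit hbz hb
    set g : K[X] := a * Polynomial.C (a.leadingCoeff)⁻¹ with hg
    have hgm : g.Monic := monic_mul_leadingCoeff_inv haz
    have hgd : g ∣ p.map (algebraMap C K) :=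
      ⟨Polynomial.C a.leadingCoeff * b, by
        rw [hab, hg]
        rw [mul_assoc, ← mul_assoc (Polynomial.C (a.leadingCoeff)⁻¹), ← Polynomial.C_mul,
          inv_mul_cancel₀ hlc, Polynomial.C_1, one_mul]⟩
    have hmem := integralClosure.mem_lifts_of_monic_of_dvd_map K hmonic hgm hgd
    have hlift : g ∈ Polynomial.lifts (algebraMap C K) := by
      rw [lifts_iff_coeff_lifts] at hmem ⊢
      intro n
      obtain ⟨y, hy⟩ := hmem n
      obtain ⟨c, hc⟩ := hcl (g.coeff n) (by
        rw [← hy]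
        exact y.2)
      exact ⟨c, hc.symm⟩
    obtain ⟨q, hq_map, hq_deg, hq_monic⟩ := lifts_and_degree_eq_and_monic hlift hgm
    have hqd : q ∣ p := by
      rw [← Polynomial.map_dvd_map (algebraMap C K) hinj hq_monic, hq_map]
      exact hgd
    have hbnd : 0 < b.natDegree := natDegree_pos_iff_degree_pos.mpr hdb
    have hand : 0 < a.natDegree := natDegree_pos_iff_degree_pos.mpr hda
    have hga : g.degree = a.degree := by
      rw [hg, degree_mul, degree_C (inv_ne_zero hlc), add_zero]
    have hqa : q.natDegree = a.natDegree :=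
      natDegree_eq_of_degree_eq (hq_deg.trans hga)
    have hpab : p.natDegree = a.natDegree + b.natDegree := by
      rw [← hdegmap, hab, natDegree_mul haz hbz]
    have hqlt : q.natDegree < p.natDegree := by
      rw [hqa, hpab]; omega
    obtain ⟨r, hr⟩ := hqd
    rcases hirr.2 hr with h | h
    · have : q.natDegree = 0 := natDegree_eq_zero_of_isUnit h
      omega
    · have hrz : r.natDegree = 0 := natDegree_eq_zero_of_isUnit h
      have hq0 : q ≠ 0 := hq_monic.ne_zero
      have hr0 : r ≠ 0 := by
        rintro rfl; rw [mul_zero] at hr; exact hmonic.ne_zero hr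
      have : p.natDegree = q.natDegree + r.natDegree := by
        rw [hr, natDegree_mul hq0 hr0]
      omega

variable {E : Type} [Field E] [Algebra C E]

theorem aux_nontrivial_right : Nontrivial (K ⊗[C] E) := by
  classical
  have b := Module.Basis.ofVectorSpace C E
  let e : K ⊗[C] E ≃ₗ[C] K ⊗[C] (Module.Basis.ofVectorSpaceIndex C E →₀ C) :=
    TensorProduct.congr (LinearEquiv.refl C K) b.repr
  let e2 := TensorProduct.finsuppScalarRight C C K (Module.Basis.ofVectorSpaceIndex C E)
  have : Nonempty (Module.Basis.ofVectorSpaceIndex C E) := b.index_nonempty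
  exact (e.trans e2).toEquiv.nontrivial

theorem aux_isField_finite [FiniteDimensional C E]
    (hcl : ∀ x : K, IsIntegral C x → ∃ c : C, x = algebraMap C K c) :
    IsField (K ⊗[C] E) := by
  classical
  haveI : CharZero E := charZero_of_injective_algebraMap (algebraMap C E).injective
  obtain ⟨α, hα⟩ := Field.exists_primitive_element C E
  have hint : IsIntegral C α := IsIntegral.of_finite C α
  set p := minpoly C α with hp
  have hmono : p.Monic := minpoly.monic hint
  have hirr : Irreducible p := minpoly.irreducible hint
  have hqirr : Irreducible (p.map (algebraMap C K)) := aux_irred_map hcl hmono hirr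
  haveI := Fact.mk hqirr
  set q : K[X] := p.map (algebraMap C K) with hq
  set x : K ⊗[C] E := 1 ⊗ₜ[C] α with hx
  have haev : aeval x q = 0 := by
    rw [hq, aeval_map_algebraMap]
    have hxe : x = Algebra.TensorProduct.includeRight (R := C) (A := K) α := rfl
    rw [hxe, aeval_algHom_apply, minpoly.aeval, map_zero]
  set φ : AdjoinRoot q →ₐ[K] K ⊗[C] E := AdjoinRoot.liftAlgHom q (Algebra.ofId K _) x haev with hφ
  haveI : Nontrivial (K ⊗[C] E) := aux_nontrivial_right
  have hsurj : Function.Surjective φ := by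
    rw [← AlgHom.range_eq_top (R := K)]
    have htop : Algebra.adjoin C {α} = (⊤ : Subalgebra C E) := by
      have h2 := IntermediateField.adjoin_simple_toSubalgebra_of_isAlgebraic (F := C) hint.isAlgebraic
      rw [hα] at h2
      rw [← h2]
      rfl
    have hmem : ∀ y : E, (1 : K) ⊗ₜ[C] y ∈ φ.range := by
      intro y
      have hy : y ∈ Algebra.adjoin C {α} := htop ▸ Algebra.mem_top
      induction hy using Algebra.adjoin_induction with
      | mem z hz =>
        rcases hz with rfl
        refine ⟨AdjoinRoot.root q, ?_⟩
        show φ (AdjoinRoot.root q) = x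
        exact AdjoinRoot.liftAlgHom_root _ _ _ _
      | algebraMap c =>
        have h1 : (1:K) ⊗ₜ[C] (algebraMap C E c) = algebraMap C (K ⊗[C] E) c := by
          rw [Algebra.algebraMap_eq_smul_one (A := E), tmul_smul,
            Algebra.algebraMap_eq_smul_one (R := C) (A := K ⊗[C] E),
            Algebra.TensorProduct.one_def]
        rw [h1, IsScalarTower.algebraMap_apply C K (K ⊗[C] E)]
        exact φ.range.algebraMap_mem _
      | add u v hu hv hiu hiv =>
        rw [tmul_add]; exact add_mem hiu hiv
      | mul u v hu hv hiu hiv =>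
        have h2 : (1:K) ⊗ₜ[C] (u*v) = ((1:K) ⊗ₜ[C] u) * ((1:K) ⊗ₜ[C] v) := by
          rw [Algebra.TensorProduct.tmul_mul_tmul, one_mul]
        rw [h2]; exact mul_mem hiu hiv
    rw [eq_top_iff]
    rintro t -
    induction t with
    | zero => exact zero_mem _
    | tmul k y =>
      have h3 : k ⊗ₜ[C] y = k • ((1:K) ⊗ₜ[C] y) := by
        rw [smul_tmul', smul_eq_mul, mul_one]
      rw [h3]
      exact Subalgebra.smul_mem _ (hmem y) k
    | add u v hu hv => exact add_mem hu hv
  refine ⟨exists_pair_ne _, mul_comm, ?_⟩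
  intro a ha
  obtain ⟨u, rfl⟩ := hsurj a
  have hu : u ≠ 0 := by rintro rfl; rw [map_zero] at ha; exact ha rfl
  exact ⟨φ u⁻¹, by rw [← map_mul, mul_inv_cancel₀ hu, map_one]⟩

end Aux

/-- Let K be a differential field (char 0) with field of constants C, and
let D be an algebraic field extension of C. Then D ⊗_C K is a field (with the
derivation id_D ⊗ ∂ extending that of K), and its field of constants is D
(i.e. the constants are exactly the elements of the form x ⊗ 1 with x ∈ D). -/
theorem stmt_5 (C K D : Type) [Field C] [CharZero C] [Field K] [Field D]
    [Algebra C K] [Algebra C D] [Algebra.IsAlgebraic C D]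
    (d : K →ₗ[C] K)
    (hd_mul : ∀ a b : K, d (a * b) = a * d b + d a * b)
    (hconst : ∀ x : K, d x = 0 ↔ ∃ c : C, x = algebraMap C K c) :
    IsField (D ⊗[C] K) ∧
      ∀ t : D ⊗[C] K, (LinearMap.lTensor D d) t = 0 ↔ ∃ x : D, t = x ⊗ₜ[C] (1 : K) := by
  classical
  have hcl : ∀ x : K, IsIntegral C x → ∃ c : C, x = algebraMap C K c :=
    aux_relclosed d hd_mul hconst
  haveI : Algebra.IsIntegral C D := Algebra.IsAlgebraic.isIntegral
  -- a basis of D over C, and the associated linear description of D ⊗ K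
  set ι := Module.Basis.ofVectorSpaceIndex C D with hι
  set b : Module.Basis ι C D := Module.Basis.ofVectorSpace C D with hb
  set e : D ⊗[C] K ≃ₗ[C] (ι →₀ K) :=
    (TensorProduct.congr b.repr (LinearEquiv.refl C K)).trans
      (TensorProduct.finsuppScalarLeft C K ι) with he
  have he_tmul : ∀ (y : D) (k : K) (i : ι), e (y ⊗ₜ[C] k) i = b.repr y i • k := by
    intro y k i
    rw [he]
    simp [TensorProduct.finsuppScalarLeft_apply_tmul_apply]
  haveI : Nonempty ι := b.index_nonempty
  haveI : Nontrivial (D ⊗[C] K) := e.toEquiv.nontrivial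
  constructor
  · -- D ⊗ K is a field
    refine ⟨exists_pair_ne _, mul_comm, ?_⟩
    intro t ht
    obtain ⟨S, hS⟩ := TensorProduct.exists_finset t
    set E := IntermediateField.adjoin C (↑(S.image Prod.fst) : Set D) with hE
    haveI : FiniteDimensional C E :=
      IntermediateField.finiteDimensional_adjoin
        (fun z _ => Algebra.IsIntegral.isIntegral z)
    have hKE : IsField (K ⊗[C] ↥E) := aux_isField_finite hcl
    have hEK : IsField (↥E ⊗[C] K) :=
      MulEquiv.isField hKE (Algebra.TensorProduct.comm C ↥E K).toMulEquiv
    set ψ : ↥E ⊗[C] K →ₐ[C] D ⊗[C] K :=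
      Algebra.TensorProduct.map E.val (AlgHom.id C K) with hψdef
    have hψr : ∀ u, ψ u = LinearMap.rTensor K (E.val.toLinearMap) u := by
      intro u
      induction u with
      | zero => simp
      | tmul a k => simp [hψdef, Algebra.TensorProduct.map_tmul]
      | add u v hu hv => rw [map_add, map_add, hu, hv]
    have hψinj : Function.Injective ψ := by
      intro u v huv
      have := Module.Flat.rTensor_preserves_injective_linearMap (M := K)
        (E.val.toLinearMap) (fun a b hab => Subtype.coe_injective hab)
      apply this
      rw [← hψr, ← hψr]
      exact huv
    -- t is in the image of ψ
    set s : ↥E ⊗[C] K := ∑ i ∈ S.attach,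
      (⟨i.1.1, IntermediateField.subset_adjoin C _
        (Finset.mem_coe.mpr (Finset.mem_image_of_mem Prod.fst i.2))⟩ : ↥E) ⊗ₜ[C] i.1.2 with hs
    have hψs : ψ s = t := by
      rw [hs, map_sum, hS]
      rw [← Finset.sum_attach S (fun i => i.1 ⊗ₜ[C] i.2)]
      exact Finset.sum_congr rfl (fun i _ => rfl)
    have hs0 : s ≠ 0 := by
      intro h
      rw [h, map_zero] at hψs
      exact ht hψs.symm
    obtain ⟨u, hu⟩ := hEK.mul_inv_cancel hs0
    refine ⟨ψ u, ?_⟩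
    rw [← hψs, ← map_mul, hu]; exact ψ.toRingHom.map_one
  · -- the constants are D ⊗ 1
    have hd1 : d 1 = 0 := aux_d_one d hd_mul
    have hnat : ∀ (u : D ⊗[C] K) (i : ι),
        e (LinearMap.lTensor D d u) i = d (e u i) := by
      intro u
      induction u with
      | zero => intro i; simp
      | tmul y k =>
        intro i
        rw [LinearMap.lTensor_tmul, he_tmul, he_tmul, map_smul]
      | add u v hu hv =>
        intro i
        rw [map_add, map_add, map_add, Finsupp.add_apply, Finsupp.add_apply, hu, hv, map_add]
    intro t
    constructor
    · intro ht
      have h0 : ∀ i : ι, d (e t i) = 0 := by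
        intro i
        rw [← hnat, ht]
        simp
      set hfun : K → C := fun k =>
        if hk : ∃ c : C, k = algebraMap C K c then hk.choose else 0 with hhfun
      have hprop : ∀ k : K, (∃ c : C, k = algebraMap C K c) → algebraMap C K (hfun k) = k := by
        intro k hk
        rw [hhfun]
        simp only [dif_pos hk]
        exact hk.choose_spec.symm
      have h00 : hfun 0 = 0 := by
        have hk : ∃ c : C, (0:K) = algebraMap C K c := ⟨0, by rw [map_zero]⟩
        have := hprop 0 hk
        exact (algebraMap C K).injective (by rw [this, map_zero])
      set g : ι →₀ C := Finsupp.mapRange hfun h00 (e t) with hg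
      refine ⟨b.repr.symm g, ?_⟩
      apply e.injective
      ext i
      rw [he_tmul, LinearEquiv.apply_symm_apply, hg, Finsupp.mapRange_apply,
        Algebra.smul_def, mul_one]
      exact (hprop _ ((hconst _).mp (h0 i))).symm
    · rintro ⟨x, rfl⟩
      rw [LinearMap.lTensor_tmul, hd1, tmul_zero]
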